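/- Let p ≥ 7 be prime and let r be even with 6 ≤ r ≤ p. Then in ℤ_(p): S_r(p−1) ≡ p·B_r + (p³/6)·r(r−1)·B_{r−2} + (p⁵/120)·r(r−1)(r−2)(r−3)·B_{r−4} (mod p⁶). -/

import Mathlib

noncomputable section

/-- `i` in the Gaussian integers. -/
def Ig : GaussianInt := ⟨0, 1⟩

/-- Classical power sum `S_r(N) = ∑_{t=1}^N t^r`. -/
def Sps (r N : ℕ) : ℤ := ∑ t ∈ Finset.Icc 1 N, (t : ℤ) ^ r

/-- Gaussian power sum `F_n(k,m) = ∑_{a=1}^k ∑_{b=1}^m (a+bi)^n`. -/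
def Fg (n k m : ℕ) : GaussianInt :=
  ∑ a ∈ Finset.Icc 1 k, ∑ b ∈ Finset.Icc 1 m, ((a : GaussianInt) + (b : GaussianInt) * Ig) ^ n

/-- Square Gaussian power sum `G_n(N) = F_n(N-1,N-1)`. -/
def Gg (n N : ℕ) : GaussianInt := Fg n (N - 1) (N - 1)

open Finset


section NormHelp
variable {p : ℕ} [hp : Fact p.Prime]

lemma myNormNatLe (m : ℕ) : ‖((m : ℚ) : ℚ_[p])‖ ≤ 1 := by
  have h := Padic.norm_int_le_one (p := p) (m : ℤ)
  push_cast at h ⊢; exact h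

lemma myNormNatEq {m : ℕ} (h0 : 0 < m) (hlt : m < p) : ‖((m : ℚ) : ℚ_[p])‖ = 1 := by
  have h1 : ¬ ((p : ℤ) ∣ (m : ℤ)) := by
    rw [Int.natCast_dvd_natCast]; exact Nat.not_dvd_of_pos_of_lt h0 hlt
  have h2 := (Padic.norm_intCast_lt_one_iff (p := p) (k := (m : ℤ))).not.mpr h1
  have h3 := Padic.norm_int_le_one (p := p) (m : ℤ)
  push_cast at h2 h3 ⊢
  linarith [not_lt.mp h2]

lemma myNormSumLe {ι : Type*} (s : Finset ι) (f : ι → ℚ_[p]) {C : ℝ} (hC : 0 ≤ C)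
    (h : ∀ i ∈ s, ‖f i‖ ≤ C) : ‖∑ i ∈ s, f i‖ ≤ C := by
  classical
  induction s using Finset.induction with
  | empty => simpa using hC
  | @insert a t ha ih =>
    rw [Finset.sum_insert ha]
    exact le_trans (Padic.nonarchimedean _ _) (max_le (h _ (mem_insert_self _ _))
      (ih fun i hi => h i (mem_insert_of_mem hi)))

lemma myBernBound : ∀ n : ℕ, n + 1 < p → ‖((bernoulli n : ℚ) : ℚ_[p])‖ ≤ p := by
  intro n
  induction n using Nat.strong_induction_on with
  | _ n IH =>
    intro hn
    have hp1 : (1:ℝ) < p := by exact_mod_cast hp.out.one_lt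
    have hp0 : (0:ℝ) < p := by linarith
    have key := sum_range_pow p n
    rw [Finset.sum_range_succ] at key
    have hn1 : ((n:ℚ) + 1) ≠ 0 := by positivity
    have hlast : bernoulli n * ((n + 1).choose n : ℚ) * (p:ℚ) ^ (n + 1 - n) / (n + 1)
        = (p : ℚ) * bernoulli n := by
      rw [Nat.choose_succ_self_right, Nat.add_sub_cancel_left]
      push_cast
      field_simp
    rw [hlast] at key
    have hEq : (p : ℚ) * bernoulli n = (∑ k ∈ range p, (k:ℚ) ^ n) -
        ∑ i ∈ range n, bernoulli i * ((n + 1).choose i : ℚ) * (p:ℚ) ^ (n + 1 - i) / (n + 1) := by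
      linarith [key]
    have hcast := congrArg (fun q : ℚ => (q : ℚ_[p])) hEq
    simp only [Rat.cast_sum, Rat.cast_mul, Rat.cast_sub, Rat.cast_div, Rat.cast_pow,
      Rat.cast_natCast, Rat.cast_add, Rat.cast_one] at hcast
    -- norm of RHS ≤ 1
    have hb1 : ‖(∑ k ∈ range p, ((k:ℚ_[p])) ^ n)‖ ≤ 1 := by
      apply myNormSumLe _ _ zero_le_one
      intro k _
      rw [norm_pow]
      calc ‖(k:ℚ_[p])‖ ^ n ≤ 1 ^ n := by
            apply pow_le_pow_left₀ (norm_nonneg _)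
            have := myNormNatLe (p := p) k; push_cast at this ⊢; exact this
        _ = 1 := one_pow n
    have hb2 : ‖∑ i ∈ range n, ((bernoulli i : ℚ) : ℚ_[p]) * ((n + 1).choose i : ℚ_[p]) *
        ((p:ℚ_[p])) ^ (n + 1 - i) / ((n:ℚ_[p]) + 1)‖ ≤ 1 := by
      apply myNormSumLe _ _ zero_le_one
      intro i hi
      rw [Finset.mem_range] at hi
      have hB : ‖((bernoulli i : ℚ) : ℚ_[p])‖ ≤ p := IH i hi (by omega)
      have hC : ‖(((n + 1).choose i : ℕ) : ℚ_[p])‖ ≤ 1 := by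
        have := myNormNatLe (p := p) ((n + 1).choose i); push_cast at this ⊢; exact this
      have hP : ‖(p:ℚ_[p]) ^ (n + 1 - i)‖ ≤ (p:ℝ)^(-2 : ℤ) := by
        rw [Padic.norm_p_pow]
        apply zpow_le_zpow_right₀ (le_of_lt hp1)
        omega
      have hD : ‖((n:ℚ_[p]) + 1)‖ = 1 := by
        have := myNormNatEq (p := p) (m := n + 1) (by omega) hn
        push_cast at this ⊢; exact this
      rw [norm_div, norm_mul, norm_mul, hD, div_one]
      calc ‖((bernoulli i : ℚ) : ℚ_[p])‖ * ‖(((n+1).choose i : ℕ) : ℚ_[p])‖ * ‖(p:ℚ_[p]) ^ (n + 1 - i)‖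
          ≤ (p:ℝ) * 1 * (p:ℝ)^(-2 : ℤ) := by
            apply mul_le_mul (mul_le_mul hB hC (norm_nonneg _) (by linarith)) hP (norm_nonneg _)
            positivity
        _ = ((p:ℝ))⁻¹ := by
            rw [mul_one, show ((-2 : ℤ)) = (-1) + (-1) by ring, zpow_add₀ (ne_of_gt hp0),
              zpow_neg_one, ← mul_assoc, mul_inv_cancel₀ (ne_of_gt hp0), one_mul]
        _ ≤ 1 := by
            rw [inv_le_one_iff₀]
            right; linarith
    have hnorm : ‖(p:ℚ_[p]) * ((bernoulli n : ℚ) : ℚ_[p])‖ ≤ 1 := by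
      rw [hcast, sub_eq_add_neg]
      refine le_trans (Padic.nonarchimedean _ _) (max_le hb1 ?_)
      rw [norm_neg]
      exact hb2
    rw [norm_mul, Padic.norm_p] at hnorm
    calc ‖((bernoulli n : ℚ) : ℚ_[p])‖ = (p:ℝ) * ((p:ℝ)⁻¹ * ‖((bernoulli n : ℚ) : ℚ_[p])‖) := by
          rw [← mul_assoc, mul_inv_cancel₀ (ne_of_gt hp0), one_mul]
      _ ≤ (p:ℝ) * 1 := mul_le_mul_of_nonneg_left hnorm (le_of_lt hp0)
      _ = p := mul_one _

end NormHelp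
lemma chooseThree (r : ℕ) (h : 2 ≤ r) : (((r+1).choose 3 : ℕ) : ℚ) = ((r:ℚ)+1) * r * ((r:ℚ)-1) / 6 := by
  have h1 : (r+1).descFactorial 3 = 6 * ((r+1).choose 3) :=
    by rw [Nat.descFactorial_eq_factorial_mul_choose]; norm_num [Nat.factorial]
  have h2 : (r+1).descFactorial 3 = (r-1) * (r * (r+1)) := by
    simp [Nat.descFactorial, show r+1-2 = r-1 from by omega]
  have h3 : 6 * ((r+1).choose 3) = (r-1)*(r*(r+1)) := by rw [← h1, h2]
  have h4 := congrArg (Nat.cast : ℕ → ℚ) h3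
  push_cast [Nat.cast_sub (show 1 ≤ r from by omega)] at h4
  field_simp
  linarith [h4]

lemma chooseFive (r : ℕ) (h : 4 ≤ r) : (((r+1).choose 5 : ℕ) : ℚ) =
    ((r:ℚ)+1) * r * ((r:ℚ)-1) * ((r:ℚ)-2) * ((r:ℚ)-3) / 120 := by
  have h1 : (r+1).descFactorial 5 = 120 * ((r+1).choose 5) :=
    by rw [Nat.descFactorial_eq_factorial_mul_choose]; norm_num [Nat.factorial]
  have h2 : (r+1).descFactorial 5 = (r-3) * ((r-2) * ((r-1) * (r * (r+1)))) := by
    simp [Nat.descFactorial, show r+1-2 = r-1 from by omega, show r+1-3 = r-2 from by omega,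
      show r+1-4 = r-3 from by omega]
  have h3 : 120 * ((r+1).choose 5) = (r-3) * ((r-2) * ((r-1) * (r * (r+1)))) := by rw [← h1, h2]
  have h4 := congrArg (Nat.cast : ℕ → ℚ) h3
  push_cast [Nat.cast_sub (show 1 ≤ r from by omega), Nat.cast_sub (show 2 ≤ r from by omega),
    Nat.cast_sub (show 3 ≤ r from by omega)] at h4
  field_simp
  linarith [h4]


theorem stmt12 (p r : ℕ) [Fact p.Prime] (hp7 : 7 ≤ p) (hr : Even r)
    (hr6 : 6 ≤ r) (hrp : r ≤ p) :
    ‖((Sps r (p - 1) : ℚ_[p]) -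
      ((p : ℚ_[p]) * ((bernoulli r : ℚ) : ℚ_[p]) +
        (p : ℚ_[p]) ^ 3 / 6 * (r : ℚ_[p]) * ((r : ℚ_[p]) - 1) * ((bernoulli (r - 2) : ℚ) : ℚ_[p]) +
        (p : ℚ_[p]) ^ 5 / 120 * (r : ℚ_[p]) * ((r : ℚ_[p]) - 1) * ((r : ℚ_[p]) - 2) *
          ((r : ℚ_[p]) - 3) * ((bernoulli (r - 4) : ℚ) : ℚ_[p])))‖ ≤ (p : ℝ) ^ (-(6 : ℤ)) := by
  have hrq : ((r:ℚ) + 1) ≠ 0 := by positivity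
  set f : ℕ → ℚ := fun i => bernoulli i * (((r+1).choose i : ℕ) : ℚ) * (p:ℚ)^(r+1-i) / ((r:ℚ)+1)
    with hf
  -- Step 1: power sum via Faulhaber
  have hS : ((Sps r (p-1) : ℤ) : ℚ) = ∑ i ∈ range (r+1), f i := by
    have h0 : ((Sps r (p-1) : ℤ) : ℚ) = ∑ k ∈ range p, (k:ℚ)^r := by
      rw [Sps]
      push_cast
      rw [show Finset.range p = insert 0 (Finset.Icc 1 (p-1)) from by
        ext k; simp [Finset.mem_range, Finset.mem_Icc]; omega]
      rw [Finset.sum_insert (by simp)]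
      norm_num [zero_pow (show r ≠ 0 from by omega)]
    rw [h0, sum_range_pow]
  -- Step 2: separate main terms
  set s : Finset ℕ := (((range (r+1)).erase r).erase (r-2)).erase (r-4) with hs
  have hmem1 : r ∈ range (r+1) := by simp
  have hmem2 : r - 2 ∈ (range (r+1)).erase r := by
    simp [Finset.mem_erase]; omega
  have hmem3 : r - 4 ∈ ((range (r+1)).erase r).erase (r-2) := by
    simp [Finset.mem_erase]; omega
  have hsplit : ∑ i ∈ range (r+1), f i = f r + (f (r-2) + (f (r-4) + ∑ i ∈ s, f i)) := by
    rw [hs, Finset.add_sum_erase _ f hmem3, Finset.add_sum_erase _ f hmem2,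
      Finset.add_sum_erase _ f hmem1]
  -- Step 3: values of main terms
  have hfr : f r = (p:ℚ) * bernoulli r := by
    rw [hf]
    simp only [Nat.choose_succ_self_right, Nat.add_sub_cancel_left]
    push_cast
    field_simp
  have hfr2 : f (r-2) = (p:ℚ)^3/6 * r * ((r:ℚ)-1) * bernoulli (r-2) := by
    rw [hf]
    simp only
    rw [show r + 1 - (r-2) = 3 from by omega, show r - 2 = (r+1) - 3 from by omega,
      Nat.choose_symm (by omega), chooseThree r (by omega)]
    field_simp
  have hfr4 : f (r-4) = (p:ℚ)^5/120 * r * ((r:ℚ)-1) * ((r:ℚ)-2) * ((r:ℚ)-3) * bernoulli (r-4) := by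
    rw [hf]
    simp only
    rw [show r + 1 - (r-4) = 5 from by omega, show r - 4 = (r+1) - 5 from by omega,
      Nat.choose_symm (by omega), chooseFive r (by omega)]
    field_simp
  -- Step 4: rewrite goal difference as cast of tail sum
  have hgoal : (Sps r (p - 1) : ℚ_[p]) -
      ((p : ℚ_[p]) * ((bernoulli r : ℚ) : ℚ_[p]) +
        (p : ℚ_[p]) ^ 3 / 6 * (r : ℚ_[p]) * ((r : ℚ_[p]) - 1) * ((bernoulli (r - 2) : ℚ) : ℚ_[p]) +
        (p : ℚ_[p]) ^ 5 / 120 * (r : ℚ_[p]) * ((r : ℚ_[p]) - 1) * ((r : ℚ_[p]) - 2) *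
          ((r : ℚ_[p]) - 3) * ((bernoulli (r - 4) : ℚ) : ℚ_[p])) = ((∑ i ∈ s, f i : ℚ) : ℚ_[p]) := by
    have h1 : (Sps r (p - 1) : ℚ_[p]) = (((Sps r (p-1) : ℤ) : ℚ) : ℚ_[p]) := by push_cast; ring
    rw [h1, hS, hsplit]
    push_cast [hfr, hfr2, hfr4]
    ring
  rw [hgoal, Rat.cast_sum]
  have hp1 : (1:ℝ) < p := by exact_mod_cast (Fact.out : p.Prime).one_lt
  have hp0 : (0:ℝ) < p := by linarith
  have hpm : p % 2 = 1 := Nat.odd_iff.mp ((Fact.out : p.Prime).odd_of_ne_two (by omega))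
  have hrm : r % 2 = 0 := Nat.even_iff.mp hr
  have hrltp : r < p := by omega
  apply myNormSumLe _ _ (by positivity)
  intro i hi
  rw [hs] at hi
  simp only [Finset.mem_erase, Finset.mem_range] at hi
  obtain ⟨hi4, hi2, hir, hilt⟩ := hi
  rcases Nat.even_or_odd i with hie | hio
  · by_cases hi0 : i = 0
    · subst hi0
      have hval : f 0 = (p:ℚ)^(r+1) / ((r:ℚ)+1) := by rw [hf]; simp
      rw [hval]
      push_cast
      rw [norm_div, Padic.norm_p_pow]
      push_cast
      have hdpos : (0:ℝ) < ‖((r:ℚ_[p])+1)‖ := by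
        apply norm_pos_iff.mpr
        have : ((r:ℚ_[p])+1) = ((r+1 : ℕ) : ℚ_[p]) := by push_cast; ring
        rw [this]
        exact Nat.cast_ne_zero.mpr (by omega)
      have hden : (p:ℝ)⁻¹ ≤ ‖((r:ℚ_[p])+1)‖ := by
        by_cases hrp1 : r + 1 = p
        · have heq : ((r:ℚ_[p])+1) = ((r + 1 : ℕ):ℚ_[p]) := by push_cast; ring
          rw [heq, hrp1, Padic.norm_p]
        · have heq : ((r:ℚ_[p])+1) = (((r+1 : ℕ) : ℚ) : ℚ_[p]) := by push_cast; ring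
          rw [heq, myNormNatEq (by omega) (by omega)]
          rw [inv_le_one_iff₀]; right; linarith
      have hinv : ‖((r:ℚ_[p])+1)‖⁻¹ ≤ (p:ℝ) := by
        rw [inv_le_comm₀ hdpos hp0]
        exact hden
      calc (p:ℝ)^(-((r:ℤ)+1)) / ‖((r:ℚ_[p])+1)‖
          = (p:ℝ)^(-((r:ℤ)+1)) * ‖((r:ℚ_[p])+1)‖⁻¹ := div_eq_mul_inv _ _
        _ ≤ (p:ℝ)^(-((r:ℤ)+1)) * (p:ℝ) := mul_le_mul_of_nonneg_left hinv (by positivity)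
        _ = (p:ℝ)^(-(r:ℤ)) := by
            rw [show (-(r:ℤ)) = (-((r:ℤ)+1)) + 1 by ring, zpow_add₀ (ne_of_gt hp0), zpow_one]
        _ ≤ (p:ℝ)^(-(6:ℤ)) := by
            apply zpow_le_zpow_right₀ (le_of_lt hp1)
            omega
    · have hile : i + 6 ≤ r := by
        have h2 := Nat.even_iff.mp hie
        have hr2 := Nat.even_iff.mp hr
        omega
      obtain ⟨j, rfl⟩ : ∃ j, i = j + 1 := ⟨i - 1, by omega⟩
      have hch : (((r+1).choose (j+1) : ℕ) : ℚ) / ((r:ℚ)+1) = ((r.choose j : ℕ) : ℚ) / ((j:ℚ)+1) := by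
        have hq := congrArg (Nat.cast : ℕ → ℚ) (Nat.add_one_mul_choose_eq r j)
        push_cast at hq
        rw [div_eq_div_iff hrq (by positivity)]
        linarith [hq]
      have hval : f (j+1) = bernoulli (j+1) * (p:ℚ)^(r+1-(j+1)) *
          (((r.choose j : ℕ) : ℚ) / ((j:ℚ)+1)) := by
        calc f (j+1) = bernoulli (j+1) * (p:ℚ)^(r+1-(j+1)) *
            ((((r+1).choose (j+1) : ℕ) : ℚ) / ((r:ℚ)+1)) := by rw [hf]; ring
          _ = _ := by rw [hch]
      rw [hval]
      push_cast
      rw [norm_mul, norm_mul, norm_div, Padic.norm_p_pow]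
      have hB : ‖((bernoulli (j+1) : ℚ) : ℚ_[p])‖ ≤ p := myBernBound _ (by omega)
      have hC : ‖((r.choose j : ℕ) : ℚ_[p])‖ ≤ 1 := by
        have := myNormNatLe (p := p) (r.choose j); push_cast at this ⊢; exact this
      have hD : ‖((j:ℚ_[p])+1)‖ = 1 := by
        have := myNormNatEq (p := p) (m := j + 1) (by omega) (by omega)
        push_cast at this ⊢; exact this
      have hP : (p:ℝ)^(-((r - j : ℕ):ℤ)) ≤ (p:ℝ)^(-(7:ℤ)) := by
        apply zpow_le_zpow_right₀ (le_of_lt hp1)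
        have : (7:ℤ) ≤ ((r - j : ℕ) : ℤ) := by
          have : 7 ≤ r - j := by omega
          exact_mod_cast this
        omega
      calc ‖((bernoulli (j+1) : ℚ) : ℚ_[p])‖ * (p:ℝ)^(-((r - j : ℕ):ℤ)) *
            (‖((r.choose j : ℕ) : ℚ_[p])‖ / ‖((j:ℚ_[p])+1)‖)
          ≤ (p:ℝ) * (p:ℝ)^(-(7:ℤ)) * 1 := by
            apply mul_le_mul _ _ (by positivity) (by positivity)
            · exact mul_le_mul hB hP (by positivity) (by linarith)
            · rw [hD, div_one]; exact hC
        _ = (p:ℝ)^(-(6:ℤ)) := by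
            rw [mul_one, show (-(6:ℤ)) = 1 + (-7) by ring, zpow_add₀ (ne_of_gt hp0), zpow_one]
  · by_cases hi1 : i = 1
    · subst hi1
      have hval : f 1 = -((p:ℚ)^r) / 2 := by
        rw [hf]
        simp only [Nat.choose_one_right, bernoulli_one, Nat.add_sub_cancel]
        push_cast
        field_simp
      rw [hval]
      push_cast
      rw [norm_div, norm_neg, Padic.norm_p_pow]
      have h2 : ‖((2:ℚ_[p]))‖ = 1 := by
        have := myNormNatEq (p := p) (m := 2) (by omega) (by omega)
        push_cast at this ⊢; exact this
      rw [h2, div_one]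
      apply zpow_le_zpow_right₀ (le_of_lt hp1)
      omega
    · have hzero : bernoulli i = 0 := by
        rw [bernoulli_eq_bernoulli'_of_ne_one hi1]
        apply bernoulli'_eq_zero_of_odd hio
        have := Nat.odd_iff.mp hio
        omega
      have hval : f i = 0 := by rw [hf]; simp [hzero]
      rw [hval]
      norm_num
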